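/- The η-temperature softmax map is (5/η)-Lipschitz from the ℓ∞ norm to the ℓ₁ norm: for all λ, λ' ∈ ℝⁿ, ‖σ(λ) − σ(λ')‖₁ ≤ (5/η) ‖λ − λ'‖_∞. -/

import Mathlib

open scoped BigOperators

set_option maxHeartbeats 1000000 in
/-- the η-temperature softmax map is (5/η)-Lipschitz from the ℓ∞ norm to the
ℓ₁ norm.  Here `‖lam - lam'‖` is the sup (ℓ∞) norm on `Fin n → ℝ` and the ℓ₁ norm is written
out as a sum of absolute values. -/
theorem softmax_lipschitz_linf_l1 (n : ℕ) (hn : 1 ≤ n) (η : ℝ) (hη : 0 < η)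
    (c : Fin n → ℝ) (σ : (Fin n → ℝ) → Fin n → ℝ)
    (hσ : ∀ lam k, σ lam k
      = Real.exp ((lam k - c k) / η) / ∑ j, Real.exp ((lam j - c j) / η)) :
    ∀ lam lam' : Fin n → ℝ,
      ∑ k, |σ lam k - σ lam' k| ≤ (5 / η) * ‖lam - lam'‖ := by
  intro lam lam'
  set d := ‖lam - lam'‖ with hd
  have hd0 : 0 ≤ d := norm_nonneg _
  set t := d / η with ht
  have ht0 : 0 ≤ t := div_nonneg hd0 hη.le
  have hgoal : (5 / η) * d = 5 * t := by rw [ht]; ring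
  set a : Fin n → ℝ := fun k => Real.exp ((lam k - c k) / η) with hadef
  set b : Fin n → ℝ := fun k => Real.exp ((lam' k - c k) / η) with hbdef
  have ha : ∀ k, 0 < a k := fun k => Real.exp_pos _
  have hb : ∀ k, 0 < b k := fun k => Real.exp_pos _
  set A := ∑ j, a j with hA'
  set B := ∑ j, b j with hB'
  have hA : 0 < A := Finset.sum_pos (fun j _ => ha j) ⟨⟨0, hn⟩, Finset.mem_univ _⟩
  have hB : 0 < B := Finset.sum_pos (fun j _ => hb j) ⟨⟨0, hn⟩, Finset.mem_univ _⟩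
  set E := Real.exp t with hE'
  have hE1 : 1 ≤ E := Real.one_le_exp ht0
  have hE0 : 0 < E := lt_of_lt_of_le one_pos hE1
  -- per-coordinate ratio bounds
  have hdiff : ∀ k, |lam k - lam' k| ≤ d := by
    intro k
    have := norm_le_pi_norm (lam - lam') k
    simpa [Real.norm_eq_abs] using this
  have hba : ∀ k, b k ≤ E * a k := by
    intro k
    have h1 : (lam' k - c k) / η ≤ t + (lam k - c k) / η := by
      have : lam' k - lam k ≤ d := by
        have := hdiff k; rw [abs_le] at this; linarith [this.1]
      rw [ht]
      rw [← add_div, div_le_div_iff₀ hη hη]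
      nlinarith
    calc b k ≤ Real.exp (t + (lam k - c k) / η) := Real.exp_le_exp.mpr h1
      _ = E * a k := by rw [Real.exp_add]
  have hab : ∀ k, a k ≤ E * b k := by
    intro k
    have h1 : (lam k - c k) / η ≤ t + (lam' k - c k) / η := by
      have : lam k - lam' k ≤ d := by
        have := hdiff k; rw [abs_le] at this; linarith [this.2]
      rw [ht]
      rw [← add_div, div_le_div_iff₀ hη hη]
      nlinarith
    calc a k ≤ Real.exp (t + (lam' k - c k) / η) := Real.exp_le_exp.mpr h1
      _ = E * b k := by rw [Real.exp_add]
  have hBA : B ≤ E * A := by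
    rw [hB', hA', Finset.mul_sum]
    exact Finset.sum_le_sum fun k _ => hba k
  have hAB : A ≤ E * B := by
    rw [hA', hB', Finset.mul_sum]
    exact Finset.sum_le_sum fun k _ => hab k
  -- pointwise bound
  have key : ∀ k, |a k / A - b k / B| ≤ (E ^ 2 - 1) * (a k / A) := by
    intro k
    have h1 : a k * B ≤ E * b k * (E * A) :=
      mul_le_mul (hab k) hBA hB.le (mul_pos hE0 (hb k)).le
    have h2 : b k * A ≤ E * a k * (E * B) :=
      mul_le_mul (hba k) hAB hA.le (mul_pos hE0 (ha k)).le
    rw [abs_sub_le_iff]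
    constructor
    · rw [div_sub_div _ _ hA.ne' hB.ne', ← mul_div_assoc,
        div_le_div_iff₀ (mul_pos hA hB) hA]
      nlinarith [mul_le_mul_of_nonneg_right h1 hA.le, pow_pos hE0 2,
        mul_nonneg (mul_nonneg (ha k).le (mul_pos hA hB).le) (sq_nonneg (E ^ 2 - 1)),
        ha k, hb k, hA, hB]
    · rw [div_sub_div _ _ hB.ne' hA.ne', ← mul_div_assoc,
        div_le_div_iff₀ (mul_pos hB hA) hA]
      nlinarith [mul_le_mul_of_nonneg_right h2 hA.le, ha k, hb k, hA, hB]
  -- rewrite sigma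
  have hsum : ∑ k, |σ lam k - σ lam' k| = ∑ k, |a k / A - b k / B| := by
    apply Finset.sum_congr rfl
    intro k _
    rw [hσ, hσ]
  rw [hsum, hgoal]
  clear_value E A B a b t d
  have bound1 : ∑ k, |a k / A - b k / B| ≤ E ^ 2 - 1 := by
    calc ∑ k, |a k / A - b k / B| ≤ ∑ k, (E ^ 2 - 1) * (a k / A) :=
          Finset.sum_le_sum fun k _ => key k
      _ = (E ^ 2 - 1) * (A / A) := by
          rw [← Finset.mul_sum, ← Finset.sum_div, ← hA']
      _ = E ^ 2 - 1 := by rw [div_self hA.ne', mul_one]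
  have bound2 : ∑ k, |a k / A - b k / B| ≤ 2 := by
    have h1 : ∑ k, |a k / A - b k / B| ≤ ∑ k, (a k / A + b k / B) := by
      apply Finset.sum_le_sum
      intro k _
      have := abs_sub (a k / A) (b k / B)
      calc |a k / A - b k / B| ≤ |a k / A| + |b k / B| := abs_sub _ _
        _ = a k / A + b k / B := by
            rw [abs_of_pos (div_pos (ha k) hA), abs_of_pos (div_pos (hb k) hB)]
    have h2 : ∑ k, (a k / A + b k / B) = 2 := by
      rw [Finset.sum_add_distrib, ← Finset.sum_div, ← Finset.sum_div, ← hA', ← hB',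
        div_self hA.ne', div_self hB.ne']
      norm_num
    linarith
  clear hσ hsum hadef hbdef hA' hB' hdiff key hab hba ha hb hBA hAB hgoal hd
  rcases le_or_gt t (2/5) with hcase | hcase
  · -- E^2 - 1 = exp(2t) - 1 ≤ 5t
    have h2t : E ^ 2 = Real.exp (2 * t) := by
      rw [hE', sq, ← Real.exp_add, two_mul]
    have hxle : |2 * t| ≤ 1 := by rw [abs_of_nonneg (by linarith)]; linarith
    have hb2 := Real.exp_bound hxle (n := 2) (by norm_num)
    have hexp : Real.exp (2 * t) ≤ 1 + 2 * t + 3 * t ^ 2 := by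
      norm_num [Finset.sum_range_succ, Nat.factorial] at hb2
      have habs := abs_le.mp hb2
      rw [abs_of_nonneg ht0] at habs; nlinarith [habs.2]
    have : E ^ 2 - 1 ≤ 5 * t := by
      rw [h2t]
      nlinarith
    linarith
  · -- 2 ≤ 5t
    have : (2 : ℝ) ≤ 5 * t := by linarith
    linarith
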